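/- Let (X,p) be a partial metric space, I an admissible ideal on ℕ, and let {a_n}, {b_n} be sequences with p(a_n,b_n) → 0 as n → ∞. If {a_n} is rough I-statistically convergent to a of roughness degree r, and c > 0 satisfies p(a_n,a_n) ≤ c for all n, then {b_n} is rough I-statistically convergent to a of roughness degree r + c. -/
import Mathlib


open Filter Topology

/-- A partial metric on a type `X`. -/
structure PartialMetric (X : Type*) where
  p : X → X → ℝ
  self_nonneg : ∀ x : X, 0 ≤ p x x
  self_le : ∀ x y : X, p x x ≤ p x y
  eq_iff : ∀ x y : X, x = y ↔ (p x x = p x y ∧ p x y = p y y)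
  symm : ∀ x y : X, p x y = p y x
  triangle : ∀ x y z : X, p x y ≤ p x z + p z y - p z z

/-- An admissible nontrivial ideal on ℕ. -/
structure IdealN where
  sets : Set (Set ℕ)
  empty_mem : ∅ ∈ sets
  subset_mem : ∀ A B : Set ℕ, A ∈ sets → B ⊆ A → B ∈ sets
  union_mem : ∀ A B : Set ℕ, A ∈ sets → B ∈ sets → A ∪ B ∈ sets
  admissible : ∀ n : ℕ, ({n} : Set ℕ) ∈ sets
  nontrivial : (Set.univ : Set ℕ) ∉ sets

open Classical in
/-- `cnt A n` = number of `k` with `1 ≤ k ≤ n` and `k ∈ A`. -/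
noncomputable def cnt (A : Set ℕ) (n : ℕ) : ℕ :=
  ((Finset.Icc 1 n).filter (fun k => k ∈ A)).card

/-- `I`-limit of a real sequence. -/
def ILim (I : IdealN) (a : ℕ → ℝ) (L : ℝ) : Prop :=
  ∀ ε > (0 : ℝ), {n : ℕ | ε ≤ |a n - L|} ∈ I.sets

lemma IdealN.finset_mem (I : IdealN) (s : Finset ℕ) : (↑s : Set ℕ) ∈ I.sets := by
  classical
  induction s using Finset.induction_on with
  | empty => simpa using I.empty_mem
  | @insert a s _ ih =>
    rw [Finset.coe_insert, Set.insert_eq]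
    exact I.union_mem _ _ (I.admissible a) ih

lemma IdealN.finite_mem (I : IdealN) {A : Set ℕ} (hA : A.Finite) : A ∈ I.sets := by
  have := I.finset_mem hA.toFinset
  rwa [Set.Finite.coe_toFinset] at this

lemma cnt_le_of_subset_union {A B : Set ℕ} (N n : ℕ)
    (h : B ⊆ A ∪ {k | k < N}) : cnt B n ≤ cnt A n + N := by
  classical
  unfold cnt
  calc ((Finset.Icc 1 n).filter (fun k => k ∈ B)).card
      ≤ (((Finset.Icc 1 n).filter (fun k => k ∈ A)) ∪
          ((Finset.Icc 1 n).filter (fun k => k < N))).card := by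
        apply Finset.card_le_card
        intro k hk
        simp only [Finset.mem_filter, Finset.mem_union] at hk ⊢
        rcases h hk.2 with h' | h'
        · exact Or.inl ⟨hk.1, h'⟩
        · exact Or.inr ⟨hk.1, h'⟩
    _ ≤ ((Finset.Icc 1 n).filter (fun k => k ∈ A)).card +
          ((Finset.Icc 1 n).filter (fun k => k < N)).card := Finset.card_union_le _ _
    _ ≤ ((Finset.Icc 1 n).filter (fun k => k ∈ A)).card + N := by
        gcongr
        calc ((Finset.Icc 1 n).filter (fun k => k < N)).card
            ≤ (Finset.range N).card := by
              apply Finset.card_le_card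
              intro k hk
              simp only [Finset.mem_filter, Finset.mem_range] at hk ⊢
              exact hk.2
          _ = N := Finset.card_range N

/-- The rough `I`-statistical limit set of degree `r` of a sequence `x`. -/
def RSLim {X : Type*} (I : IdealN) (P : PartialMetric X) (x : ℕ → X) (r : ℝ) : Set X :=
  {ξ | ∀ ε > (0 : ℝ), ∀ δ > (0 : ℝ),
    {n : ℕ | δ ≤ (cnt {k | r + ε ≤ |P.p (x k) ξ - P.p ξ ξ|} n : ℝ) / n} ∈ I.sets}

theorem stmt_8 {X : Type*} (I : IdealN) (P : PartialMetric X) (a b : ℕ → X)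
    (r : ℝ) (hr : 0 ≤ r) (a₀ : X) (c : ℝ) (hc : 0 < c)
    (hab : Filter.Tendsto (fun n => P.p (a n) (b n)) atTop (nhds 0))
    (ha : a₀ ∈ RSLim I P a r)
    (hself : ∀ n : ℕ, P.p (a n) (a n) ≤ c) :
    a₀ ∈ RSLim I P b (r + c) := by
  intro ε hε δ hδ
  -- eventually p(a k, b k) < c
  have hev : ∀ᶠ k in atTop, P.p (a k) (b k) < c := hab.eventually_lt_const hc
  obtain ⟨N, hN⟩ := eventually_atTop.1 hev
  -- pointwise bound
  have key : ∀ k : ℕ, N ≤ k →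
      r + c + ε ≤ |P.p (b k) a₀ - P.p a₀ a₀| → r + ε ≤ |P.p (a k) a₀ - P.p a₀ a₀| := by
    intro k hk hbk
    have h1 : P.p (b k) a₀ ≤ P.p (b k) (a k) + P.p (a k) a₀ - P.p (a k) (a k) :=
      P.triangle _ _ _
    have h2 : P.p (a k) a₀ ≤ P.p (a k) (b k) + P.p (b k) a₀ - P.p (b k) (b k) :=
      P.triangle _ _ _
    have hs1 := P.self_nonneg (a k)
    have hs2 := P.self_nonneg (b k)
    have hsymm : P.p (b k) (a k) = P.p (a k) (b k) := P.symm _ _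
    have hdiff : |P.p (b k) a₀ - P.p (a k) a₀| ≤ P.p (a k) (b k) := by
      rw [abs_le]; constructor <;> linarith
    have : |P.p (b k) a₀ - P.p a₀ a₀| ≤ |P.p (a k) a₀ - P.p a₀ a₀| + P.p (a k) (b k) := by
      calc |P.p (b k) a₀ - P.p a₀ a₀|
          ≤ |P.p (b k) a₀ - P.p (a k) a₀| + |P.p (a k) a₀ - P.p a₀ a₀| := by
            have := abs_sub_le (P.p (b k) a₀) (P.p (a k) a₀) (P.p a₀ a₀)
            linarith
        _ ≤ |P.p (a k) a₀ - P.p a₀ a₀| + P.p (a k) (b k) := by linarith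
    have hck := hN k hk
    linarith
  have hsub : {k | r + c + ε ≤ |P.p (b k) a₀ - P.p a₀ a₀|} ⊆
      {k | r + ε ≤ |P.p (a k) a₀ - P.p a₀ a₀|} ∪ {k | k < N} := by
    intro k hk
    by_cases hkN : k < N
    · exact Or.inr hkN
    · exact Or.inl (key k (le_of_not_gt hkN) hk)
  have hcnt : ∀ n, cnt {k | r + c + ε ≤ |P.p (b k) a₀ - P.p a₀ a₀|} n ≤
      cnt {k | r + ε ≤ |P.p (a k) a₀ - P.p a₀ a₀|} n + N :=
    fun n => cnt_le_of_subset_union N n hsub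
  have hA := ha ε hε (δ / 2) (by linarith)
  have hF : ({n : ℕ | (n : ℝ) ≤ 2 * N / δ} : Set ℕ) ∈ I.sets := by
    apply I.finite_mem
    apply Set.Finite.subset (Set.finite_Iic (Nat.ceil (2 * N / δ)))
    intro n hn
    simp only [Set.mem_setOf_eq] at hn
    have : (n : ℝ) ≤ (Nat.ceil (2 * N / δ) : ℝ) := le_trans hn (Nat.le_ceil _)
    exact_mod_cast this
  apply I.subset_mem _ _ (I.union_mem _ _ hA hF)
  intro n hn
  simp only [Set.mem_setOf_eq] at hn
  rcases Nat.eq_zero_or_pos n with rfl | hn0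
  · exfalso
    simp [cnt] at hn
    linarith
  have hnpos : (0 : ℝ) < n := by exact_mod_cast hn0
  by_cases hN2 : (N : ℝ) / n ≤ δ / 2
  · left
    simp only [Set.mem_setOf_eq]
    have := hcnt n
    have h1 : (cnt {k | r + c + ε ≤ |P.p (b k) a₀ - P.p a₀ a₀|} n : ℝ) ≤
        (cnt {k | r + ε ≤ |P.p (a k) a₀ - P.p a₀ a₀|} n : ℝ) + N := by exact_mod_cast this
    rw [le_div_iff₀ hnpos] at hn ⊢
    rw [div_le_iff₀ hnpos] at hN2
    linarith
  · right
    simp only [Set.mem_setOf_eq]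
    push_neg at hN2
    rw [lt_div_iff₀ hnpos] at hN2
    rw [le_div_iff₀ hδ]
    nlinarith
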